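/- Let E be a directed graph. The operator (H,S) ↦ (H⊥, S⊥) on the set of admissible pairs of E is decreasing: if (H,S) ≤ (G,T) for admissible pairs (H,S) and (G,T), then (G⊥, T⊥) ≤ (H⊥, S⊥), i.e. G⊥ ⊆ H⊥ and T⊥ ⊆ H⊥ ∪ S⊥. -/
import Mathlib


namespace GraphAnn

variable {V E : Type*}

/-- `u ≥ v`: there is a (possibly trivial) path from `u` to `v`. -/
def Reach (s r : E → V) : V → V → Prop :=
  Relation.ReflTransGen (fun a b => ∃ e, s e = a ∧ r e = b)

/-- The root `R(W)` of a set of vertices. -/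
def Root (s r : E → V) (W : Set V) : Set V :=
  {u | ∃ v ∈ W, Reach s r u v}

def Hereditary (s r : E → V) (H : Set V) : Prop :=
  ∀ u v, u ∈ H → Reach s r u v → v ∈ H

def IsSink (s : E → V) (v : V) : Prop := ∀ e : E, s e ≠ v

def IsInfiniteEmitter (s : E → V) (v : V) : Prop := {e : E | s e = v}.Infinite

def IsRegular (s : E → V) (v : V) : Prop := ¬ IsSink s v ∧ ¬ IsInfiniteEmitter s v

def Saturated (s r : E → V) (H : Set V) : Prop :=
  ∀ v, IsRegular s v → (∀ e : E, s e = v → r e ∈ H) → v ∈ H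

/-- `V⊥ = E⁰ − R(V)`. -/
def perp (s r : E → V) (W : Set V) : Set V := {v | v ∉ Root s r W}

/-- Breaking vertices `B_H`. -/
def Breaking (s r : E → V) (H : Set V) : Set V :=
  {v | v ∉ H ∧ IsInfiniteEmitter s v ∧
    {e : E | s e = v ∧ r e ∉ H}.Nonempty ∧ {e : E | s e = v ∧ r e ∉ H}.Finite}

/-- `(H,S)` is an admissible pair. -/
def Admissible (s r : E → V) (H S : Set V) : Prop :=
  Hereditary s r H ∧ Saturated s r H ∧ S ⊆ Breaking s r H

/-- `S⊥ = B_{H⊥} − S`. -/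
def Sperp (s r : E → V) (H S : Set V) : Set V := Breaking s r (perp s r H) \ S

/-- A cycle: a closed path of positive length in which distinct edges have
distinct sources. -/
structure GCycle (s r : E → V) where
  edges : List E
  ne : edges ≠ []
  chain : edges.Chain' (fun e f => r e = s f)
  closed : r (edges.getLast ne) = s (edges.head ne)
  srcNodup : (edges.map s).Nodup

/-- The vertex set `c⁰` of a cycle. -/
def GCycle.verts {s r : E → V} (c : GCycle s r) : Set V :=
  {v | ∃ e ∈ c.edges, s e = v}

/-- A cycle has an exit. -/
def GCycle.HasExit {s r : E → V} (c : GCycle s r) : Prop :=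
  ∃ e, s e ∈ c.verts ∧ e ∉ c.edges

/-- An extreme cycle: it has an exit and every exit returns. -/
def GCycle.Extreme {s r : E → V} (c : GCycle s r) : Prop :=
  c.HasExit ∧ ∀ v ∈ c.verts, ∀ w, Reach s r v w → ∃ u ∈ c.verts, Reach s r w u

/-- The vertex set `α⁰` of an infinite path `α`. -/
def InfPathVerts (s : E → V) (α : ℕ → E) : Set V := {v | ∃ n, s (α n) = v}

/-- Conditions (a), (b), (c): the graph is all-reflexive. -/
def AllReflexiveGraph (s r : E → V) : Prop :=
  (∀ c : GCycle s r, ¬ c.HasExit ∨ c.Extreme) ∧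
  (∀ v, IsInfiniteEmitter s v → ∃ c : GCycle s r, v ∈ c.verts) ∧
  (∀ α : ℕ → E, (∀ n, r (α n) = s (α (n + 1))) →
    {e : E | s e ∈ InfPathVerts s α ∧ r e ∉ Root s r (InfPathVerts s α)}.Finite)

/-- The operator `(H,S) ↦ (H⊥, S⊥)` on admissible pairs is decreasing:
`(H,S) ≤ (G,T)` implies `(G⊥, T⊥) ≤ (H⊥, S⊥)`. -/
theorem perp_decreasing (s r : E → V) (H S G T : Set V)
    (hHS : Admissible s r H S) (hGT : Admissible s r G T)
    (hHG : H ⊆ G) (hST : S ⊆ G ∪ T) :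
    perp s r G ⊆ perp s r H ∧
      Sperp s r G T ⊆ perp s r H ∪ Sperp s r H S := by
  have rootMono : ∀ A B : Set V, A ⊆ B → Root s r A ⊆ Root s r B := by
    intro A B hAB v ⟨w, hw, hvw⟩; exact ⟨w, hAB hw, hvw⟩
  have hRootHG : Root s r H ⊆ Root s r G := rootMono _ _ hHG
  constructor
  · intro v hv hvH; exact hv (hRootHG hvH)
  · rintro v ⟨⟨hvG, hinf, hne, hfin⟩, hvT⟩
    by_cases hvH : v ∈ perp s r H
    · exact Or.inl hvH
    · right
      -- v ∈ Root H
      have hvRH : v ∈ Root s r H := by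
        by_contra h; exact hvH h
      -- v ∉ G (else infinitely many edges from v land in Root G)
      have hvnG : v ∉ G := by
        intro hvGmem
        have : {e : E | s e = v} ⊆ {e : E | s e = v ∧ r e ∉ perp s r G} := by
          intro e he
          refine ⟨he, ?_⟩
          intro hperp
          exact hperp ⟨r e, hGT.1 v (r e) hvGmem
            (Relation.ReflTransGen.single ⟨e, he, rfl⟩), Relation.ReflTransGen.refl⟩
        exact hinf (hfin.subset this)
      -- v ∉ H
      have hvnH : v ∉ H := fun h => hvnG (hHG h)
      -- v ∉ S
      have hvnS : v ∉ S := by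
        intro hvS
        rcases hST hvS with h | h
        · exact hvnG h
        · exact hvT h
      refine ⟨⟨?_, hinf, ?_, ?_⟩, hvnS⟩
      · intro hperp; exact hperp hvRH
      · -- nonempty: first edge of a nontrivial path from v to H
        obtain ⟨w, hwH, hreach⟩ := hvRH
        rcases Relation.ReflTransGen.cases_head hreach with heq | ⟨b, ⟨e, hse, hre⟩, hbw⟩
        · exact absurd (heq ▸ hwH) hvnH
        · refine ⟨e, hse, ?_⟩
          intro hperp
          exact hperp ⟨w, hwH, hre ▸ hbw⟩
      · -- finite: subset of the corresponding set for G
        refine hfin.subset ?_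
        intro e ⟨hse, hre⟩
        refine ⟨hse, ?_⟩
        intro hperp
        apply hre
        intro hrG
        exact hperp (hRootHG hrG)

end GraphAnn
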